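/- arXiv:2006.11607 — 5 statements merged into one kernel-verified Lean document; each statement's English description precedes it below -/
import Mathlib

section
/- Let $S$ be a finite set of size $n$, let $X_1, \ldots, X_m$ be uniformly sampled from $S$ without replacement (i.e., $(X_1,\ldots,X_m)$ is uniform over ordered tuples of distinct elements), and let $X'_1, \ldots, X'_m$ be i.i.d. uniform on $S$. Then for any non-negative function $f : S^m \to \mathbb{R}_{\ge 0}$, we have $\mathbb{E}[f(X_1,\ldots,X_m)] \le \left(1 + \frac{m}{n-m}\right)^m \, \mathbb{E}[f(X'_1,\ldots,X'_m)]$. -/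
open Finset

/-- Expectation of a non-negative function under uniform sampling without replacement
is at most `(1 + m/(n-m))^m` times its expectation under i.i.d. uniform sampling. -/
theorem sampling_without_replacement_comparison
    (S : Type*) [Fintype S] [DecidableEq S] (m : ℕ)
    (hmn : m < Fintype.card S)
    (f : (Fin m → S) → ℝ) (hf : ∀ g, 0 ≤ f g) :
    (∑ σ : Fin m ↪ S, f (fun i => σ i)) / (Fintype.card (Fin m ↪ S) : ℝ)
      ≤ (1 + (m : ℝ) / ((Fintype.card S : ℝ) - m)) ^ m *
        ((∑ g : Fin m → S, f g) / (Fintype.card S : ℝ) ^ m) := by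
  set n := Fintype.card S with hn
  have hm : (m : ℝ) < n := by exact_mod_cast hmn
  have hnm : (0 : ℝ) < (n : ℝ) - m := by linarith
  have hn0 : (0 : ℝ) < (n : ℝ) := (Nat.cast_nonneg m).trans_lt hm
  have hE : Fintype.card (Fin m ↪ S) = n.descFactorial m := by
    simp [Fintype.card_embedding_eq]; rfl
  have hEpos : 0 < n.descFactorial m :=
    Nat.pos_of_ne_zero fun h => absurd (Nat.descFactorial_eq_zero_iff_lt.mp h) (by omega)
  -- A ≤ B
  have hAB : (∑ σ : Fin m ↪ S, f (fun i => σ i)) ≤ ∑ g : Fin m → S, f g := by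
    have : (∑ σ : Fin m ↪ S, f (fun i => σ i))
        = ∑ g ∈ Finset.univ.image (fun σ : Fin m ↪ S => (σ : Fin m → S)), f g := by
      rw [Finset.sum_image]
      intro a _ b _ h
      exact DFunLike.coe_injective h
    rw [this]
    exact Finset.sum_le_sum_of_subset_of_nonneg (Finset.subset_univ _)
      (fun g _ _ => hf g)
  have hBnn : (0 : ℝ) ≤ ∑ g : Fin m → S, f g :=
    Finset.sum_nonneg fun g _ => hf g
  have h1 : 1 + (m : ℝ) / ((n : ℝ) - m) = (n : ℝ) / ((n : ℝ) - m) := by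
    field_simp
    ring
  rw [h1, hE]
  have hkey : ((n : ℝ) - m) ^ m ≤ (n.descFactorial m : ℝ) := by
    have h2 : ((n - m : ℕ) : ℝ) = (n : ℝ) - m := by
      push_cast [Nat.cast_sub hmn.le]; ring
    rw [← h2]
    have : (n - m) ^ m ≤ n.descFactorial m := by
      calc (n - m) ^ m ≤ (n + 1 - m) ^ m :=
            Nat.pow_le_pow_left (by omega) m
        _ ≤ n.descFactorial m := Nat.pow_sub_le_descFactorial n m
    exact_mod_cast this
  have hrhs : ((n : ℝ) / ((n : ℝ) - m)) ^ m * ((∑ g : Fin m → S, f g) / (n : ℝ) ^ m)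
      = (∑ g : Fin m → S, f g) / ((n : ℝ) - m) ^ m := by
    rw [div_pow, div_mul_div_comm, mul_comm ((n:ℝ)^m)]
    exact mul_div_mul_right _ _ (by positivity)
  rw [hrhs]
  calc (∑ σ : Fin m ↪ S, f (fun i => σ i)) / (n.descFactorial m : ℝ)
      ≤ (∑ g : Fin m → S, f g) / (n.descFactorial m : ℝ) := by
        gcongr
    _ ≤ (∑ g : Fin m → S, f g) / ((n : ℝ) - m) ^ m := by
        apply div_le_div_of_nonneg_left hBnn (by positivity) hkey
end

section
/- Let $X_1, \ldots, X_n$ be arbitrary (possibly dependent) random variables taking values in $[0,1]$ and let $m \ge 2$ be an integer. Suppose $p \in [0,1]$ satisfies: for every subset $A \subseteq [n]$ with $|A| \le m$, $\mathbb{E}\left[\prod_{i \in A} X_i\right] \le p^{|A|}$. If $m \le np$, then $\mathbb{E}\left[\left(\sum_{i=1}^n X_i\right)^m\right] \le (2e^2 np)^m$. -/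
open MeasureTheory Finset

private lemma image_cons_eq {n m : ℕ} (v : Fin n) (g : Fin m → Fin n) :
    (Finset.univ.image (Fin.cons v g : Fin (m + 1) → Fin n)) =
      insert v (Finset.univ.image g) := by
  ext x
  simp only [Finset.mem_image, Finset.mem_univ, true_and, Finset.mem_insert]
  constructor
  · rintro ⟨j, rfl⟩
    rcases Fin.eq_zero_or_eq_succ j with rfl | ⟨i, rfl⟩
    · left; simp
    · right; exact ⟨i, by simp⟩
  · rintro (rfl | ⟨i, rfl⟩)
    · exact ⟨0, by simp⟩
    · exact ⟨i.succ, by simp⟩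

private lemma key_sum (n : ℕ) (p : ℝ) (hp0 : 0 ≤ p) (hp1 : p ≤ 1) :
    ∀ m : ℕ, ∑ f : Fin m → Fin n, p ^ (Finset.univ.image f).card ≤ ((n : ℝ) * p + m) ^ m := by
  intro m
  induction m with
  | zero => simp
  | succ m ih =>
      have hstep : ∀ g : Fin m → Fin n,
          ∑ v : Fin n, p ^ (insert v (Finset.univ.image g)).card
            ≤ ((n : ℝ) * p + m) * p ^ (Finset.univ.image g).card := by
        intro g
        set S := Finset.univ.image g with hS
        have hcardS : (S.card : ℝ) ≤ m := by
          have := Finset.card_image_le (s := (Finset.univ : Finset (Fin m))) (f := g)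
          simp only [Finset.card_univ, Fintype.card_fin] at this
          exact_mod_cast this
        rw [← Finset.sum_filter_add_sum_filter_not Finset.univ (· ∈ S)]
        have h1 : ∑ v ∈ Finset.univ.filter (· ∈ S), p ^ (insert v S).card
            ≤ (m : ℝ) * p ^ S.card := by
          have : ∀ v ∈ Finset.univ.filter (· ∈ S), p ^ (insert v S).card = p ^ S.card := by
            intro v hv
            rw [Finset.insert_eq_self.2 (by simpa using hv)]
          rw [Finset.sum_congr rfl this, Finset.sum_const, nsmul_eq_mul]
          have hc : ((Finset.univ.filter (· ∈ S)).card : ℝ) ≤ m := by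
            refine le_trans ?_ hcardS
            exact_mod_cast Finset.card_le_card (fun v hv => by simpa using hv)
          exact mul_le_mul_of_nonneg_right hc (pow_nonneg hp0 _)
        have h2 : ∑ v ∈ Finset.univ.filter (· ∉ S), p ^ (insert v S).card
            ≤ (n : ℝ) * p * p ^ S.card := by
          have : ∀ v ∈ Finset.univ.filter (· ∉ S), p ^ (insert v S).card
              = p * p ^ S.card := by
            intro v hv
            rw [Finset.card_insert_of_notMem (by simpa using hv), pow_succ, mul_comm]
          rw [Finset.sum_congr rfl this, Finset.sum_const, nsmul_eq_mul]
          have hc : ((Finset.univ.filter (· ∉ S)).card : ℝ) ≤ n := by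
            exact_mod_cast le_trans (Finset.card_filter_le _ _) (by simp)
          rw [mul_assoc]
          exact mul_le_mul_of_nonneg_right hc (mul_nonneg hp0 (pow_nonneg hp0 _))
        calc _ ≤ (m : ℝ) * p ^ S.card + (n : ℝ) * p * p ^ S.card := add_le_add h1 h2
          _ = ((n : ℝ) * p + m) * p ^ S.card := by ring
      have hre : ∑ f : Fin (m + 1) → Fin n, p ^ (Finset.univ.image f).card
          = ∑ q : Fin n × (Fin m → Fin n),
              p ^ (insert q.1 (Finset.univ.image q.2)).card := by
        rw [← (Fin.consEquiv (fun _ : Fin (m + 1) => Fin n)).symm.sum_comp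
          (fun q : Fin n × (Fin m → Fin n) =>
            p ^ (insert q.1 (Finset.univ.image q.2)).card)]
        refine Finset.sum_congr rfl fun f _ => ?_
        have : f = Fin.cons (f 0) (fun i => f i.succ) := by
          ext j
          rcases Fin.eq_zero_or_eq_succ j with rfl | ⟨i, rfl⟩ <;> simp
        conv_lhs => rw [this, image_cons_eq]
        rfl
      rw [hre, Fintype.sum_prod_type_right]
      calc ∑ g : Fin m → Fin n, ∑ v : Fin n, p ^ (insert v (Finset.univ.image g)).card
          ≤ ∑ g : Fin m → Fin n, ((n : ℝ) * p + m) * p ^ (Finset.univ.image g).card :=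
            Finset.sum_le_sum fun g _ => hstep g
        _ = ((n : ℝ) * p + m) * ∑ g : Fin m → Fin n, p ^ (Finset.univ.image g).card := by
            rw [Finset.mul_sum]
        _ ≤ ((n : ℝ) * p + m) * ((n : ℝ) * p + m) ^ m := by
            refine mul_le_mul_of_nonneg_left ih ?_
            positivity
        _ = ((n : ℝ) * p + m) ^ (m + 1) := by ring
        _ ≤ ((n : ℝ) * p + (m + 1 : ℕ)) ^ (m + 1) := by
            refine pow_le_pow_left₀ (by positivity) ?_ _
            push_cast; linarith

/-- Moment bound for sums of dependent `[0,1]`-valued random variables whose product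
moments of order at most `m` are dominated by `p^|A|`. -/
theorem moment_bound {Ω : Type*} [MeasurableSpace Ω] (μ : Measure Ω) [IsProbabilityMeasure μ]
    (n m : ℕ) (hm : 2 ≤ m) (X : Fin n → Ω → ℝ)
    (hmeas : ∀ i, Measurable (X i))
    (hX : ∀ i ω, X i ω ∈ Set.Icc (0 : ℝ) 1)
    (p : ℝ) (hp : p ∈ Set.Icc (0 : ℝ) 1)
    (hprod : ∀ A : Finset (Fin n), A.card ≤ m →
      (∫ ω, ∏ i ∈ A, X i ω ∂μ) ≤ p ^ A.card)
    (hmnp : (m : ℝ) ≤ n * p) :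
    (∫ ω, (∑ i, X i ω) ^ m ∂μ) ≤ (2 * Real.exp 2 * n * p) ^ m := by
  obtain ⟨hp0, hp1⟩ := hp
  -- integrability of products over arbitrary index collections
  have hinteg : ∀ {ι : Type} (s : Finset ι) (g : ι → Fin n),
      Integrable (fun ω => ∏ j ∈ s, X (g j) ω) μ := by
    intro ι s g
    have hmeasP : Measurable (fun ω => ∏ j ∈ s, X (g j) ω) :=
      Finset.measurable_prod s fun j _ => hmeas (g j)
    refine Integrable.mono' (integrable_const (1 : ℝ)) hmeasP.aestronglyMeasurable
      (Filter.Eventually.of_forall fun ω => ?_)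
    rw [Real.norm_eq_abs, abs_of_nonneg (Finset.prod_nonneg fun j _ => (hX (g j) ω).1)]
    exact Finset.prod_le_one (fun j _ => (hX (g j) ω).1) (fun j _ => (hX (g j) ω).2)
  have hintegA : ∀ A : Finset (Fin n), Integrable (fun ω => ∏ i ∈ A, X i ω) μ := by
    intro A
    simpa using hinteg A (fun i => i)
  -- expand the power
  have hexpand : (∫ ω, (∑ i, X i ω) ^ m ∂μ)
      = ∑ f : Fin m → Fin n, ∫ ω, ∏ j, X (f j) ω ∂μ := by
    rw [← integral_finset_sum _ fun f _ => hinteg Finset.univ f]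
    refine integral_congr_ae (Filter.Eventually.of_forall fun ω => ?_)
    exact Fintype.sum_pow (fun i => X i ω) m
  rw [hexpand]
  -- bound each term
  have hterm : ∀ f : Fin m → Fin n,
      (∫ ω, ∏ j, X (f j) ω ∂μ) ≤ p ^ (Finset.univ.image f).card := by
    intro f
    have hcard : (Finset.univ.image f).card ≤ m := by
      refine le_trans Finset.card_image_le ?_
      simp
    refine le_trans ?_ (hprod _ hcard)
    refine integral_mono (hinteg Finset.univ f) (hintegA _)
      (fun ω => ?_)
    -- pointwise: ∏ j, X (f j) ω ≤ ∏ i in image f, X i ω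
    have hfib : ∏ j : Fin m, X (f j) ω
        = ∏ i ∈ Finset.univ.image f, ∏ j ∈ Finset.univ.filter (f · = i), X (f j) ω := by
      rw [Finset.prod_fiberwise_of_maps_to (fun j _ => Finset.mem_image_of_mem f (mem_univ j))]
    rw [hfib]
    refine Finset.prod_le_prod (fun i _ => Finset.prod_nonneg fun j _ => (hX (f j) ω).1)
      (fun i hi => ?_)
    have hinner : ∏ j ∈ Finset.univ.filter (f · = i), X (f j) ω
        = (X i ω) ^ (Finset.univ.filter (f · = i)).card := by
      rw [Finset.prod_congr rfl (fun j hj => by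
        rw [(Finset.mem_filter.1 hj).2]), Finset.prod_const]
    rw [hinner]
    have hne : (Finset.univ.filter (f · = i)).Nonempty := by
      obtain ⟨j, _, rfl⟩ := Finset.mem_image.1 hi
      exact ⟨j, Finset.mem_filter.2 ⟨mem_univ j, rfl⟩⟩
    have hcpos : (Finset.univ.filter (f · = i)).card ≠ 0 :=
      Finset.card_ne_zero_of_mem hne.choose_spec
    exact pow_le_of_le_one (hX i ω).1 (hX i ω).2 hcpos
  have hnp0 : (0 : ℝ) ≤ (n : ℝ) * p := by positivity
  calc ∑ f : Fin m → Fin n, ∫ ω, ∏ j, X (f j) ω ∂μ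
      ≤ ∑ f : Fin m → Fin n, p ^ (Finset.univ.image f).card :=
        Finset.sum_le_sum fun f _ => hterm f
    _ ≤ ((n : ℝ) * p + m) ^ m := key_sum n p hp0 hp1 m
    _ ≤ (2 * Real.exp 2 * n * p) ^ m := by
        refine pow_le_pow_left₀ (by positivity) ?_ _
        have he : (1 : ℝ) ≤ Real.exp 2 := Real.one_le_exp (by norm_num)
        nlinarith [hnp0, hmnp]
end

section
/- Let $X_1, \ldots, X_n$ be random variables in $[0,1]$ and $m \ge 2$ an integer, and let $p \in [0,1]$ with $m \le np$ be such that $\mathbb{E}[\prod_{i \in A} X_i] \le p^{|A|}$ for all $A \subseteq [n]$ with $|A| \le m$. Then for every $\alpha > 0$, $\Pr\left(\sum_{i=1}^n X_i \ge \alpha n p\right) \le \left(\frac{2e^2}{\alpha}\right)^m$. -/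
open MeasureTheory Finset

private lemma integrable_of_bdd {Ω : Type*} [MeasurableSpace Ω] (μ : Measure Ω)
    [IsFiniteMeasure μ] {f : Ω → ℝ} (hf : Measurable f) (C : ℝ) (h : ∀ ω, ‖f ω‖ ≤ C) :
    Integrable f μ :=
  (integrable_const C).mono' hf.aestronglyMeasurable (Filter.Eventually.of_forall h)

private lemma fiber_card_le (n m k : ℕ) :
    ((univ : Finset (Fin m → Fin n)).filter fun t => (univ.image t).card = k).card
      ≤ n.choose k * k ^ m := by
  classical
  calc ((univ : Finset (Fin m → Fin n)).filter fun t => (univ.image t).card = k).card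
      ≤ ((powersetCard k (univ : Finset (Fin n))).biUnion
          (fun S => Fintype.piFinset fun _ : Fin m => S)).card := by
        apply card_le_card
        intro t ht
        simp only [mem_filter, mem_univ, true_and] at ht
        refine mem_biUnion.2 ⟨univ.image t, mem_powersetCard.2 ⟨subset_univ _, ht⟩, ?_⟩
        exact Fintype.mem_piFinset.2 fun j => mem_image_of_mem t (mem_univ j)
    _ ≤ ∑ S ∈ powersetCard k (univ : Finset (Fin n)),
          (Fintype.piFinset fun _ : Fin m => S).card := card_biUnion_le
    _ ≤ ∑ _S ∈ powersetCard k (univ : Finset (Fin n)), k ^ m := by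
        apply sum_le_sum
        intro S hS
        rw [Fintype.card_piFinset_const, (mem_powersetCard.1 hS).2]
    _ = n.choose k * k ^ m := by
        rw [sum_const, card_powersetCard, card_univ, Fintype.card_fin, smul_eq_mul]

private lemma term_le {n m k : ℕ} {p : ℝ} (hp0 : 0 ≤ p) (hk1 : 1 ≤ k) (hkm : k ≤ m)
    (hmnp : (m : ℝ) ≤ n * p) :
    ((n.choose k * k ^ m : ℕ) : ℝ) * p ^ k ≤ (Real.exp 1 * (n * p)) ^ m := by
  have hnp0 : (0 : ℝ) ≤ n * p := le_trans (by positivity) hmnp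
  have hknp : (k : ℝ) ≤ n * p := le_trans (by exact_mod_cast hkm) hmnp
  have hk0 : (0 : ℝ) ≤ k := Nat.cast_nonneg k
  have hfac : (0 : ℝ) < (Nat.factorial k : ℝ) := by positivity
  have h1 : ((n.choose k : ℕ) : ℝ) ≤ (n : ℝ) ^ k / (Nat.factorial k : ℝ) :=
    Nat.choose_le_pow_div k n
  calc ((n.choose k * k ^ m : ℕ) : ℝ) * p ^ k
      = ((n.choose k : ℕ) : ℝ) * ((k : ℝ) ^ m * p ^ k) := by push_cast; ring
    _ ≤ ((n : ℝ) ^ k / (Nat.factorial k : ℝ)) * ((k : ℝ) ^ m * p ^ k) := by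
        apply mul_le_mul_of_nonneg_right h1 (by positivity)
    _ = ((n : ℝ) * p) ^ k * ((k : ℝ) ^ (m - k) * ((k : ℝ) ^ k / (Nat.factorial k : ℝ))) := by
        have hkk : (k : ℝ) ^ m = (k : ℝ) ^ (m - k) * (k : ℝ) ^ k := by
          rw [← pow_add, Nat.sub_add_cancel hkm]
        rw [mul_pow, hkk]; ring
    _ ≤ ((n : ℝ) * p) ^ k * (((n : ℝ) * p) ^ (m - k) * Real.exp m) := by
        apply mul_le_mul_of_nonneg_left _ (by positivity)
        apply mul_le_mul
        · exact pow_le_pow_left₀ hk0 hknp _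
        · calc (k : ℝ) ^ k / (Nat.factorial k : ℝ) ≤ Real.exp k :=
                Real.pow_div_factorial_le_exp _ hk0 k
            _ ≤ Real.exp m := Real.exp_le_exp.2 (by exact_mod_cast hkm)
        · positivity
        · positivity
    _ = ((n : ℝ) * p) ^ m * Real.exp m := by
        rw [← mul_assoc, ← pow_add, Nat.add_sub_cancel' hkm]
    _ = (Real.exp 1 * (n * p)) ^ m := by
        have : Real.exp (m : ℝ) = Real.exp 1 ^ m := by
          rw [← Real.exp_nat_mul, mul_one]
        rw [this, mul_pow]; ring

/-- Tail bound for sums of dependent `[0,1]`-valued random variables whose product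
moments of order at most `m` are dominated by `p^|A|`. -/
theorem tail_bound {Ω : Type*} [MeasurableSpace Ω] (μ : Measure Ω) [IsProbabilityMeasure μ]
    (n m : ℕ) (hm : 2 ≤ m) (X : Fin n → Ω → ℝ)
    (hmeas : ∀ i, Measurable (X i))
    (hX : ∀ i ω, X i ω ∈ Set.Icc (0 : ℝ) 1)
    (p : ℝ) (hp : p ∈ Set.Icc (0 : ℝ) 1)
    (hprod : ∀ A : Finset (Fin n), A.card ≤ m →
      (∫ ω, ∏ i ∈ A, X i ω ∂μ) ≤ p ^ A.card)
    (hmnp : (m : ℝ) ≤ n * p) (α : ℝ) (hα : 0 < α) :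
    μ {ω | α * n * p ≤ ∑ i, X i ω} ≤ ENNReal.ofReal ((2 * Real.exp 2 / α) ^ m) := by
  classical
  haveI : NeZero m := ⟨by omega⟩
  have hp0 : 0 ≤ p := hp.1
  have hm0 : (0 : ℝ) < m := by
    have : 0 < m := by omega
    exact_mod_cast this
  have hnp0 : (0 : ℝ) < n * p := lt_of_lt_of_le hm0 hmnp
  -- the sum
  set S : Ω → ℝ := fun ω => ∑ i, X i ω with hS
  have hSmeas : Measurable S := Finset.measurable_sum _ fun i _ => hmeas i
  have hS0 : ∀ ω, 0 ≤ S ω := fun ω => Finset.sum_nonneg fun i _ => (hX i ω).1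
  have hSn : ∀ ω, S ω ≤ n := fun ω => by
    calc S ω ≤ ∑ _i : Fin n, (1 : ℝ) := Finset.sum_le_sum fun i _ => (hX i ω).2
      _ = n := by simp
  -- integrability of products over finsets
  have hintA : ∀ A : Finset (Fin n), Integrable (fun ω => ∏ i ∈ A, X i ω) μ := by
    intro A
    apply integrable_of_bdd μ (Finset.measurable_prod _ fun i _ => hmeas i) 1
    intro ω
    rw [Real.norm_eq_abs, abs_of_nonneg (Finset.prod_nonneg fun i _ => (hX i ω).1)]
    exact Finset.prod_le_one (fun i _ => (hX i ω).1) (fun i _ => (hX i ω).2)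
  have hintT : ∀ t : Fin m → Fin n, Integrable (fun ω => ∏ j, X (t j) ω) μ := by
    intro t
    apply integrable_of_bdd μ (Finset.measurable_prod _ fun j _ => hmeas (t j)) 1
    intro ω
    rw [Real.norm_eq_abs, abs_of_nonneg (Finset.prod_nonneg fun j _ => (hX (t j) ω).1)]
    exact Finset.prod_le_one (fun j _ => (hX (t j) ω).1) (fun j _ => (hX (t j) ω).2)
  -- moment bound
  have hmoment : (∫ ω, S ω ^ m ∂μ) ≤ (2 * Real.exp 2 * (n * p)) ^ m := by
    have hexp : ∀ ω, S ω ^ m = ∑ t : Fin m → Fin n, ∏ j, X (t j) ω := by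
      intro ω
      exact Fintype.sum_pow (fun i => X i ω) m
    calc (∫ ω, S ω ^ m ∂μ) = ∑ t : Fin m → Fin n, ∫ ω, ∏ j, X (t j) ω ∂μ := by
          rw [← integral_finset_sum _ fun t _ => hintT t]
          exact integral_congr_ae (Filter.Eventually.of_forall fun ω => hexp ω)
      _ ≤ ∑ t : Fin m → Fin n, p ^ (univ.image t).card := by
          apply Finset.sum_le_sum
          intro t _
          have hpt : ∀ ω, (∏ j, X (t j) ω) ≤ ∏ i ∈ univ.image t, X i ω := by
            intro ω
            rw [Finset.prod_comp (fun i => X i ω) t]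
            apply Finset.prod_le_prod
            · intro i _; exact pow_nonneg (hX i ω).1 _
            · intro i hi
              have hcard : 1 ≤ ({a ∈ univ | t a = i} : Finset (Fin m)).card := by
                rw [Nat.one_le_iff_ne_zero, Ne, Finset.card_eq_zero,
                  ← Finset.not_nonempty_iff_eq_empty, not_not]
                obtain ⟨a, _, ha⟩ := Finset.mem_image.1 hi
                exact ⟨a, Finset.mem_filter.2 ⟨mem_univ a, ha⟩⟩
              calc X i ω ^ ({a ∈ univ | t a = i} : Finset (Fin m)).card
                  ≤ X i ω ^ 1 := pow_le_pow_of_le_one (hX i ω).1 (hX i ω).2 hcard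
                _ = X i ω := pow_one _
          calc (∫ ω, ∏ j, X (t j) ω ∂μ) ≤ ∫ ω, ∏ i ∈ univ.image t, X i ω ∂μ :=
                integral_mono (hintT t) (hintA _) hpt
            _ ≤ p ^ (univ.image t).card := by
                apply hprod
                calc (univ.image t).card ≤ (univ : Finset (Fin m)).card := card_image_le
                  _ = m := by rw [card_univ, Fintype.card_fin]
      _ = ∑ k ∈ (univ : Finset (Fin m → Fin n)).image (fun t => (univ.image t).card),
            ({t ∈ univ | (univ.image t).card = k} : Finset (Fin m → Fin n)).card • p ^ k :=
          Finset.sum_comp (fun k => p ^ k) (fun t => (univ.image t).card)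
      _ ≤ ∑ k ∈ (univ : Finset (Fin m → Fin n)).image (fun t => (univ.image t).card),
            (Real.exp 1 * (n * p)) ^ m := by
          apply Finset.sum_le_sum
          intro k hk
          obtain ⟨t, _, ht⟩ := Finset.mem_image.1 hk
          have hk1 : 1 ≤ k := by
            rw [← ht, Nat.one_le_iff_ne_zero, Ne, Finset.card_eq_zero,
              Finset.image_eq_empty, ← Finset.not_nonempty_iff_eq_empty, not_not]
            exact Finset.univ_nonempty
          have hkm : k ≤ m := by
            rw [← ht]
            calc (univ.image t).card ≤ (univ : Finset (Fin m)).card := card_image_le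
              _ = m := by rw [card_univ, Fintype.card_fin]
          calc ({t ∈ univ | (univ.image t).card = k} : Finset (Fin m → Fin n)).card • p ^ k
              = (({t ∈ univ | (univ.image t).card = k} : Finset (Fin m → Fin n)).card : ℝ)
                  * p ^ k := nsmul_eq_mul _ _
            _ ≤ ((n.choose k * k ^ m : ℕ) : ℝ) * p ^ k := by
                apply mul_le_mul_of_nonneg_right _ (by positivity)
                exact_mod_cast fiber_card_le n m k
            _ ≤ (Real.exp 1 * (n * p)) ^ m := term_le hp0 hk1 hkm hmnp
      _ ≤ (m : ℝ) * (Real.exp 1 * (n * p)) ^ m := by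
          rw [Finset.sum_const, nsmul_eq_mul]
          apply mul_le_mul_of_nonneg_right _ (by positivity)
          have : ((univ : Finset (Fin m → Fin n)).image (fun t => (univ.image t).card) : Finset ℕ)
              ⊆ Finset.Icc 1 m := by
            intro k hk
            obtain ⟨t, _, ht⟩ := Finset.mem_image.1 hk
            refine Finset.mem_Icc.2 ⟨?_, ?_⟩
            · rw [← ht, Nat.one_le_iff_ne_zero, Ne, Finset.card_eq_zero,
                Finset.image_eq_empty, ← Finset.not_nonempty_iff_eq_empty, not_not]
              exact Finset.univ_nonempty
            · rw [← ht]
              calc (univ.image t).card ≤ (univ : Finset (Fin m)).card := card_image_le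
                _ = m := by rw [card_univ, Fintype.card_fin]
          calc (((univ : Finset (Fin m → Fin n)).image
                (fun t => (univ.image t).card)).card : ℝ)
              ≤ ((Finset.Icc 1 m).card : ℝ) := by exact_mod_cast Finset.card_le_card this
            _ = m := by rw [Nat.card_Icc]; simp
      _ ≤ (2 : ℝ) ^ m * (Real.exp 1 * (n * p)) ^ m := by
          apply mul_le_mul_of_nonneg_right _ (by positivity)
          exact_mod_cast (Nat.lt_two_pow_self (n := m)).le
      _ ≤ (2 * Real.exp 2 * (n * p)) ^ m := by
          rw [← mul_pow]
          apply pow_le_pow_left₀ (by positivity)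
          have h12 : Real.exp 1 ≤ Real.exp 2 := Real.exp_le_exp.2 one_le_two
          nlinarith [Real.exp_pos 1, hnp0.le]
  -- Markov
  have hc : (0 : ℝ) < α * n * p := by
    rw [mul_assoc]; exact mul_pos hα hnp0
  have hintSm : Integrable (fun ω => S ω ^ m) μ := by
    apply integrable_of_bdd μ (hSmeas.pow_const m) ((n : ℝ) ^ m)
    intro ω
    rw [Real.norm_eq_abs, abs_of_nonneg (pow_nonneg (hS0 ω) m)]
    exact pow_le_pow_left₀ (hS0 ω) (hSn ω) m
  have hmarkov := mul_meas_ge_le_integral_of_nonneg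
    (Filter.Eventually.of_forall fun ω => pow_nonneg (hS0 ω) m) hintSm ((α * n * p) ^ m)
  have hsub : {ω | α * n * p ≤ S ω} ⊆ {ω | (α * n * p) ^ m ≤ S ω ^ m} := by
    intro ω hω
    exact pow_le_pow_left₀ hc.le hω m
  have hfin : μ {ω | α * n * p ≤ S ω} ≠ ⊤ := measure_ne_top μ _
  have hmono : μ {ω | α * n * p ≤ S ω} ≤ μ {ω | (α * n * p) ^ m ≤ S ω ^ m} :=
    measure_mono hsub
  have hToReal : (μ {ω | α * n * p ≤ S ω}).toReal ≤ (2 * Real.exp 2 / α) ^ m := by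
    have h1 : (α * n * p) ^ m * (μ {ω | (α * n * p) ^ m ≤ S ω ^ m}).toReal
        ≤ (2 * Real.exp 2 * (n * p)) ^ m := le_trans hmarkov hmoment
    have h2 : (μ {ω | α * n * p ≤ S ω}).toReal
        ≤ (μ {ω | (α * n * p) ^ m ≤ S ω ^ m}).toReal :=
      ENNReal.toReal_mono (measure_ne_top μ _) hmono
    have hcm : (0 : ℝ) < (α * n * p) ^ m := pow_pos hc m
    have h3 : (μ {ω | (α * n * p) ^ m ≤ S ω ^ m}).toReal
        ≤ (2 * Real.exp 2 * (n * p)) ^ m / (α * n * p) ^ m := by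
      rw [le_div_iff₀ hcm]; linarith [h1]
    have h4 : (2 * Real.exp 2 * (n * p)) ^ m / (α * n * p) ^ m
        = (2 * Real.exp 2 / α) ^ m := by
      rw [← div_pow]
      congr 1
      have hn' : (n : ℝ) ≠ 0 := by rintro h; rw [h] at hnp0; simp at hnp0
      have hp' : p ≠ 0 := by rintro h; rw [h] at hnp0; simp at hnp0
      field_simp
    linarith [h2, h3, h4 ▸ h3]
  calc μ {ω | α * n * p ≤ S ω}
      = ENNReal.ofReal (μ {ω | α * n * p ≤ S ω}).toReal := (ENNReal.ofReal_toReal hfin).symm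
    _ ≤ ENNReal.ofReal ((2 * Real.exp 2 / α) ^ m) := ENNReal.ofReal_le_ofReal hToReal
end

section
/- Let $k \ge 80$, let $m \le (\ln k)/4$ be a positive integer, define $\psi(\gamma) = 1$ for $\gamma < 1$, $\psi(\gamma) = 2/k$ for $1 \le \gamma \le 50$, and $\psi(\gamma) = 4k e^{-(\gamma/20)\ln k}$ for $\gamma > 50$, and let $n \ge 1$. Then there is a universal constant $a_2 > 0$ (e.g. $a_2 = 500$ suffices) such that $\int_{[0,n]^m} \psi\left(\max_{i \in [m]} x_i - \tfrac{1}{k}\right)\, dx \le 1 + \frac{a_2^m}{k}$. -/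
open MeasureTheory

set_option maxHeartbeats 1000000


/-- The tentative-selection probability bound. -/
noncomputable def psi (k γ : ℝ) : ℝ :=
  if γ < 1 then 1
  else if γ ≤ 50 then 2 / k
  else 4 * k * Real.exp (-(γ / 20) * Real.log k)

lemma psi_nonneg {k : ℝ} (hk : 0 < k) (γ : ℝ) : 0 ≤ psi k γ := by
  unfold psi; split_ifs <;> positivity

lemma measurable_psi (k : ℝ) : Measurable (psi k) := by
  unfold psi
  refine Measurable.ite ?_ measurable_const (Measurable.ite ?_ measurable_const (by fun_prop))
  · exact measurableSet_lt measurable_id measurable_const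
  · exact measurableSet_le measurable_id measurable_const

lemma integral_cube_prod {m : ℕ} {S : Set ℝ} (hS : MeasurableSet S) (g : ℝ → ℝ) :
    ∫ x : Fin m → ℝ in Set.univ.pi fun _ => S, ∏ i, g (x i)
      = (∫ t in S, g t) ^ m := by
  rw [← integral_indicator (MeasurableSet.univ_pi fun _ => hS)]
  have h : ((Set.univ.pi fun _ : Fin m => S).indicator fun x => ∏ i, g (x i))
      = fun x => ∏ i, S.indicator g (x i) := by
    funext x
    by_cases hx : x ∈ Set.univ.pi fun _ : Fin m => S
    · rw [Set.indicator_of_mem hx]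
      exact Finset.prod_congr rfl fun i _ => (Set.indicator_of_mem (hx i trivial) g).symm
    · rw [Set.indicator_of_notMem hx]
      simp only [Set.mem_pi, Set.mem_univ, forall_true_left, not_forall] at hx
      obtain ⟨i, hi⟩ := hx
      exact (Finset.prod_eq_zero (Finset.mem_univ i) (Set.indicator_of_notMem hi g)).symm
  rw [h, MeasureTheory.integral_fintype_prod_volume_eq_pow (ι := Fin m) (S.indicator g),
    integral_indicator hS, Fintype.card_fin]

lemma integral_exp_bound {c n : ℝ} (hc : 0 < c) :
    ∫ t in Set.Icc (0:ℝ) n, Real.exp (-c * t) ≤ 1 / c := by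
  have hint : IntegrableOn (fun t => Real.exp (-c * t)) (Set.Ici (0:ℝ)) :=
    (exp_neg_integrableOn_Ioi (-1) hc).mono_set (Set.Ici_subset_Ioi.mpr (by norm_num))
  have h1 : ∫ t in Set.Icc (0:ℝ) n, Real.exp (-c * t)
      ≤ ∫ t in Set.Ici (0:ℝ), Real.exp (-c * t) :=
    setIntegral_mono_set hint (Filter.Eventually.of_forall fun t => (Real.exp_pos _).le)
      (HasSubset.Subset.eventuallyLE Set.Icc_subset_Ici_self)
  have h2 : ∫ t in Set.Ici (0:ℝ), Real.exp (-c * t) = 1 / c := by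
    rw [MeasureTheory.integral_Ici_eq_integral_Ioi]
    have h3 := integral_comp_mul_left_Ioi (fun t => Real.exp (-t)) 0 hc
    simp only [mul_zero, integral_exp_neg_Ioi_zero, smul_eq_mul, mul_one] at h3
    simp only [neg_mul]
    rw [h3, one_div]
  linarith

lemma integral_indicator_bound {a n : ℝ} (ha : 0 ≤ a) :
    ∫ t in Set.Icc (0:ℝ) n, (Set.Icc (0:ℝ) a).indicator (fun _ => (1:ℝ)) t ≤ a := by
  rw [setIntegral_indicator measurableSet_Icc, setIntegral_const, smul_eq_mul, mul_one]
  have : Set.Icc (0:ℝ) n ∩ Set.Icc (0:ℝ) a ⊆ Set.Icc 0 a := Set.inter_subset_right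
  calc (volume (Set.Icc (0:ℝ) n ∩ Set.Icc (0:ℝ) a)).toReal
      ≤ (volume (Set.Icc (0:ℝ) a)).toReal := by
        apply ENNReal.toReal_mono (by simp [Real.volume_Icc]) (measure_mono this)
    _ = a := by simp [Real.volume_Icc, ha]

lemma one_add_pow_le (m : ℕ) {x : ℝ} (hx0 : 0 ≤ x) (hx1 : x ≤ 1) :
    (1 + x) ^ m ≤ 1 + (2 ^ m - 1) * x := by
  induction m with
  | zero => simp
  | succ m ih =>
    have h2 : (1:ℝ) ≤ 2 ^ m := one_le_pow₀ (by norm_num)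
    have h3 : (0:ℝ) ≤ (2 ^ m - 1) := by linarith
    calc (1+x)^(m+1) = (1+x)^m * (1+x) := pow_succ _ _
      _ ≤ (1 + (2^m - 1)*x) * (1+x) := by nlinarith
      _ ≤ 1 + (2^(m+1) - 1)*x := by
          have h4 : (2:ℝ)^(m+1) = 2^m * 2 := pow_succ _ _
          nlinarith [mul_nonneg (mul_nonneg hx0 (sub_nonneg.mpr hx1)) h3]



lemma psi_pointwise_bound {k : ℝ} (hk : 80 ≤ k) {m : ℕ} (hm : 0 < m)
    (hmk : (m : ℝ) ≤ Real.log k / 4) {n : ℝ} (hn : 1 ≤ n)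
    (x : Fin m → ℝ) (hx : x ∈ Set.univ.pi fun _ => Set.Icc (0 : ℝ) n) :
    psi k ((⨆ i, x i) - 1 / k) ≤
      (∏ i, (Set.Icc (0:ℝ) (1 + 1/k)).indicator (fun _ => (1:ℝ)) (x i))
      + (2 / k) * (∏ i, (Set.Icc (0:ℝ) 51).indicator (fun _ => (1:ℝ)) (x i))
      + (4 / k) * ∏ i, Real.exp (-(Real.log k / (100 * (m:ℝ))) * x i) := by
  haveI : Nonempty (Fin m) := Fin.pos_iff_nonempty.mp hm
  have hk0 : (0:ℝ) < k := by linarith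
  set L := Real.log k with hLdef
  have hL : 0 < L := Real.log_pos (by linarith)
  have hL80 : Real.log 4 ≤ L := Real.log_le_log (by norm_num) (by linarith)
  have hlog4 : Real.log 4 = 2 * Real.log 2 := by
    rw [show (4:ℝ) = 2^2 by norm_num, Real.log_pow]; push_cast; ring
  set z := ⨆ i, x i with hzdef
  have hxz : ∀ i, x i ≤ z := fun i => le_ciSup (Set.Finite.bddAbove (Set.finite_range x)) i
  have hx' : ∀ i, x i ∈ Set.Icc (0:ℝ) n := fun i => hx i trivial
  have hz0 : 0 ≤ z := le_trans (hx' ⟨0, hm⟩).1 (hxz ⟨0, hm⟩)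
  have h1k : 1/k ≤ 1/80 := by
    rw [div_le_div_iff₀ hk0 (by norm_num)]; linarith
  have h1k0 : 0 < 1/k := by positivity
  -- nonnegativity of the three products
  have hP1 : (0:ℝ) ≤ ∏ i, (Set.Icc (0:ℝ) (1 + 1/k)).indicator (fun _ => (1:ℝ)) (x i) :=
    Finset.prod_nonneg fun i _ => Set.indicator_nonneg (fun _ _ => zero_le_one) _
  have hP2 : (0:ℝ) ≤ ∏ i, (Set.Icc (0:ℝ) 51).indicator (fun _ => (1:ℝ)) (x i) :=
    Finset.prod_nonneg fun i _ => Set.indicator_nonneg (fun _ _ => zero_le_one) _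
  have hP3 : (0:ℝ) ≤ ∏ i, Real.exp (-(L / (100 * (m:ℝ))) * x i) :=
    Finset.prod_nonneg fun i _ => (Real.exp_pos _).le
  unfold psi
  split_ifs with h1 h2
  · -- case z - 1/k < 1
    have hprod : (∏ i, (Set.Icc (0:ℝ) (1 + 1/k)).indicator (fun _ => (1:ℝ)) (x i)) = 1 := by
      rw [Finset.prod_congr rfl fun i _ => Set.indicator_of_mem
        (Set.mem_Icc.mpr ⟨(hx' i).1, by have := hxz i; linarith⟩) (fun _ => (1:ℝ))]
      exact Finset.prod_const_one
    rw [hprod]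
    nlinarith [mul_nonneg (by positivity : (0:ℝ) ≤ 2/k) hP2,
      mul_nonneg (by positivity : (0:ℝ) ≤ 4/k) hP3]
  · -- case 1 ≤ z - 1/k ≤ 50
    have hprod : (∏ i, (Set.Icc (0:ℝ) 51).indicator (fun _ => (1:ℝ)) (x i)) = 1 := by
      rw [Finset.prod_congr rfl fun i _ => Set.indicator_of_mem
        (Set.mem_Icc.mpr ⟨(hx' i).1, by have := hxz i; linarith⟩) (fun _ => (1:ℝ))]
      exact Finset.prod_const_one
    rw [hprod, mul_one]
    nlinarith [mul_nonneg (by positivity : (0:ℝ) ≤ 4/k) hP3]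
  · -- case z - 1/k > 50
    push_neg at h1 h2
    have hexpL : Real.exp L = k := Real.exp_log hk0
    by_cases hz51 : z ≤ 51
    · -- still bounded by 2/k
      have hprod : (∏ i, (Set.Icc (0:ℝ) 51).indicator (fun _ => (1:ℝ)) (x i)) = 1 := by
        rw [Finset.prod_congr rfl fun i _ => Set.indicator_of_mem
          (Set.mem_Icc.mpr ⟨(hx' i).1, le_trans (hxz i) hz51⟩) (fun _ => (1:ℝ))]
        exact Finset.prod_const_one
      rw [hprod, mul_one]
      have hE : Real.exp (-((z - 1/k) / 20) * L) ≤ Real.exp (-(5/2 * L)) := by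
        apply Real.exp_le_exp.mpr; nlinarith
      have hX : 2 * k^2 ≤ Real.exp (5/2 * L) := by
        have hsplit : Real.exp (5/2 * L) = Real.exp L * Real.exp L * Real.exp (L/2) := by
          rw [← Real.exp_add, ← Real.exp_add]; ring_nf
        have h2' : (2:ℝ) ≤ Real.exp (L/2) := by
          have h := Real.exp_le_exp.mpr (show Real.log 2 ≤ L/2 by linarith)
          rwa [Real.exp_log (by norm_num : (0:ℝ) < 2)] at h
        rw [hsplit, hexpL]
        nlinarith
      have hE2 : Real.exp (-(5/2 * L)) ≤ 1 / (2 * k^2) := by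
        rw [Real.exp_neg]
        apply inv_anti₀ (by positivity) hX |>.trans
        rw [one_div]
      have hmain : 4 * k * Real.exp (-((z - 1/k) / 20) * L) ≤ 2 / k := by
        have : 4 * k * Real.exp (-((z - 1/k) / 20) * L) ≤ 4 * k * (1 / (2 * k^2)) := by
          apply mul_le_mul_of_nonneg_left (hE.trans hE2) (by positivity)
        have heq : 4 * k * (1 / (2 * k^2)) = 2 / k := by field_simp; ring
        linarith [heq ▸ this]
      nlinarith [mul_nonneg (by positivity : (0:ℝ) ≤ 4/k) hP3]
    · -- tail
      push_neg at hz51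
      set c := L / (100 * (m:ℝ)) with hcdef
      have hm0 : (0:ℝ) < m := by exact_mod_cast hm
      have hc0 : 0 < c := by positivity
      have hsum : ∑ i, x i ≤ (m:ℝ) * z := by
        calc ∑ i, x i ≤ Finset.univ.card • z :=
              Finset.sum_le_card_nsmul Finset.univ x z fun i _ => hxz i
          _ = (m:ℝ) * z := by simp [nsmul_eq_mul]
      have hprod3 : (∏ i, Real.exp (-c * x i)) = Real.exp (-c * ∑ i, x i) := by
        rw [← Real.exp_sum, ← Finset.mul_sum]
      have hcm : c * (m:ℝ) = L / 100 := by
        rw [hcdef]; field_simp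
      have hP3ge : Real.exp (-(L/100) * z) ≤ ∏ i, Real.exp (-c * x i) := by
        rw [hprod3]
        apply Real.exp_le_exp.mpr
        have : c * ∑ i, x i ≤ c * ((m:ℝ) * z) :=
          mul_le_mul_of_nonneg_left hsum hc0.le
        rw [← mul_assoc, hcm] at this
        linarith
      have hQ : 2 + z/100 - (z - 1/k)/20 ≤ 0 := by linarith
      have hA : -((z - 1/k)/20) * L + 2*L ≤ -(L/100) * z := by
        nlinarith [mul_nonneg hL.le (neg_nonneg.mpr hQ)]
      have hk2 : k^2 = Real.exp (2*L) := by
        rw [show (2:ℝ)*L = L + L by ring, Real.exp_add, hexpL]; ring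
      have hkey : 4 * k * Real.exp (-((z - 1/k)/20) * L) ≤ (4/k) * Real.exp (-(L/100) * z) := by
        have h1' : Real.exp (-((z - 1/k)/20) * L) * k^2 ≤ Real.exp (-(L/100) * z) := by
          rw [hk2, ← Real.exp_add]
          exact Real.exp_le_exp.mpr hA
        rw [div_mul_eq_mul_div, le_div_iff₀ hk0]
        nlinarith [Real.exp_pos (-((z - 1/k)/20) * L)]
      have hfinal : (4/k) * Real.exp (-(L/100) * z) ≤ (4/k) * ∏ i, Real.exp (-c * x i) :=
        mul_le_mul_of_nonneg_left hP3ge (by positivity)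
      have h2k : 0 ≤ (2/k) * ∏ i, (Set.Icc (0:ℝ) 51).indicator (fun _ => (1:ℝ)) (x i) :=
        mul_nonneg (by positivity) hP2
      linarith





section Main
variable {k n : ℝ} {m : ℕ}

theorem main_test (hk : 80 ≤ k) (hm : 0 < m) (hmk : (m : ℝ) ≤ Real.log k / 4) (hn : 1 ≤ n) :
    (∫ x : Fin m → ℝ in Set.univ.pi fun _ => Set.Icc (0 : ℝ) n,
        psi k ((⨆ i, x i) - 1 / k)) ≤ 1 + 500 ^ m / k := by
  haveI : Nonempty (Fin m) := Fin.pos_iff_nonempty.mp hm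
  have hk0 : (0:ℝ) < k := by linarith
  have hL : 0 < Real.log k := Real.log_pos (by linarith)
  have hm0 : (0:ℝ) < m := by exact_mod_cast hm
  set cube := Set.univ.pi fun _ : Fin m => Set.Icc (0 : ℝ) n with hcube
  have hcube_meas : MeasurableSet cube := MeasurableSet.univ_pi fun _ => measurableSet_Icc
  have hcube_fin : volume cube ≠ ⊤ := by
    rw [hcube, volume_pi_pi]
    simp only [Real.volume_Icc, sub_zero, Finset.prod_const, Finset.card_univ, Fintype.card_fin]
    exact ENNReal.pow_ne_top ENNReal.ofReal_ne_top
  -- measurability of the integrand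
  have hsup_meas : Measurable fun x : Fin m → ℝ => ⨆ i, x i := by
    have h : (fun x : Fin m → ℝ => ⨆ i, x i)
        = Finset.univ.sup' Finset.univ_nonempty fun i (x : Fin m → ℝ) => x i := by
      funext x
      rw [Finset.sup'_apply]
      exact (Finset.sup'_univ_eq_ciSup fun i => x i).symm
    rw [h]
    exact Finset.measurable_sup' Finset.univ_nonempty fun i _ => measurable_pi_apply i
  have hmble : Measurable fun x : Fin m → ℝ => psi k ((⨆ i, x i) - 1/k) :=
    (measurable_psi k).comp (hsup_meas.sub measurable_const)
  have hpsi_bdd : ∀ γ : ℝ, ‖psi k γ‖ ≤ 4 * k := by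
    intro γ
    rw [Real.norm_eq_abs, abs_of_nonneg (psi_nonneg hk0 γ)]
    unfold psi
    split_ifs with h1 h2
    · linarith
    · rw [div_le_iff₀ hk0]; nlinarith
    · nlinarith [Real.exp_le_one_iff.mpr (by nlinarith [hL.le] : -(γ/20) * Real.log k ≤ 0),
        Real.exp_pos (-(γ/20) * Real.log k)]
  have hInt_psi : IntegrableOn (fun x : Fin m → ℝ => psi k ((⨆ i, x i) - 1/k)) cube :=
    Measure.integrableOn_of_bounded hcube_fin hmble.aestronglyMeasurable
      (ae_of_all _ fun x => hpsi_bdd _)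
  -- the three bounding products
  set c := Real.log k / (100 * (m:ℝ)) with hcdef
  have hc0 : 0 < c := by positivity
  set P1 : (Fin m → ℝ) → ℝ := fun x => ∏ i, (Set.Icc (0:ℝ) (1 + 1/k)).indicator (fun _ => (1:ℝ)) (x i) with hP1def
  set P2 : (Fin m → ℝ) → ℝ := fun x => ∏ i, (Set.Icc (0:ℝ) 51).indicator (fun _ => (1:ℝ)) (x i) with hP2def
  set P3 : (Fin m → ℝ) → ℝ := fun x => ∏ i, Real.exp (-c * x i) with hP3def
  have hmeas_ind : ∀ a : ℝ, Measurable ((Set.Icc (0:ℝ) a).indicator (fun _ => (1:ℝ))) :=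
    fun a => Measurable.indicator measurable_const measurableSet_Icc
  have hIntP1 : IntegrableOn P1 cube := by
    apply Measure.integrableOn_of_bounded (M := 1) hcube_fin
    · exact (Finset.measurable_prod Finset.univ fun i _ =>
        (hmeas_ind (1 + 1/k)).comp (measurable_pi_apply i)).aestronglyMeasurable
    · refine ae_of_all _ fun x => ?_
      rw [Real.norm_eq_abs, abs_of_nonneg (Finset.prod_nonneg fun i _ =>
        Set.indicator_nonneg (fun _ _ => zero_le_one) _)]
      exact Finset.prod_le_one (fun i _ => Set.indicator_nonneg (fun _ _ => zero_le_one) _)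
        (fun i _ => by unfold Set.indicator; split_ifs <;> norm_num)
  have hIntP2 : IntegrableOn P2 cube := by
    apply Measure.integrableOn_of_bounded (M := 1) hcube_fin
    · exact (Finset.measurable_prod Finset.univ fun i _ =>
        (hmeas_ind 51).comp (measurable_pi_apply i)).aestronglyMeasurable
    · refine ae_of_all _ fun x => ?_
      rw [Real.norm_eq_abs, abs_of_nonneg (Finset.prod_nonneg fun i _ =>
        Set.indicator_nonneg (fun _ _ => zero_le_one) _)]
      exact Finset.prod_le_one (fun i _ => Set.indicator_nonneg (fun _ _ => zero_le_one) _)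
        (fun i _ => by unfold Set.indicator; split_ifs <;> norm_num)
  have hIntP3 : IntegrableOn P3 cube := by
    apply Measure.integrableOn_of_bounded (M := 1) hcube_fin
    · exact (Finset.measurable_prod Finset.univ fun i _ =>
        ((Real.measurable_exp.comp (measurable_const.mul measurable_id)).comp
          (measurable_pi_apply i))).aestronglyMeasurable
    · filter_upwards [ae_restrict_mem hcube_meas] with x hx
      rw [Real.norm_eq_abs, abs_of_nonneg (Finset.prod_nonneg fun i _ => (Real.exp_pos _).le)]
      refine Finset.prod_le_one (fun i _ => (Real.exp_pos _).le) fun i _ => ?_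
      have hxi : 0 ≤ x i := (hx i trivial).1
      exact Real.exp_le_one_iff.mpr (by nlinarith)
  -- pointwise comparison
  have hmono : (∫ x in cube, psi k ((⨆ i, x i) - 1/k))
      ≤ ∫ x in cube, (P1 x + (2/k) * P2 x + (4/k) * P3 x) := by
    apply setIntegral_mono_on hInt_psi
      ((hIntP1.add (hIntP2.const_mul (2/k))).add (hIntP3.const_mul (4/k))) hcube_meas
    intro x hx
    exact psi_pointwise_bound hk hm hmk hn x hx
  -- split and compute
  have hI2' : IntegrableOn (fun x => (2/k) * P2 x) cube := hIntP2.const_mul (2/k)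
  have hI3' : IntegrableOn (fun x => (4/k) * P3 x) cube := hIntP3.const_mul (4/k)
  have hI12 : IntegrableOn (fun x => P1 x + (2/k) * P2 x) cube := hIntP1.add hI2'
  have hsplit : ∫ x in cube, (P1 x + (2/k) * P2 x + (4/k) * P3 x)
      = (∫ x in cube, P1 x) + (2/k) * (∫ x in cube, P2 x) + (4/k) * (∫ x in cube, P3 x) := by
    rw [integral_add hI12 hI3', integral_add hIntP1 hI2', integral_const_mul, integral_const_mul]
  have hval1 : (∫ x in cube, P1 x)
      = (∫ t in Set.Icc (0:ℝ) n, (Set.Icc (0:ℝ) (1 + 1/k)).indicator (fun _ => (1:ℝ)) t) ^ m := by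
    rw [hP1def, hcube]
    exact integral_cube_prod measurableSet_Icc ((Set.Icc (0:ℝ) (1 + 1/k)).indicator (fun _ => (1:ℝ)))
  have hval2 : (∫ x in cube, P2 x)
      = (∫ t in Set.Icc (0:ℝ) n, (Set.Icc (0:ℝ) 51).indicator (fun _ => (1:ℝ)) t) ^ m := by
    rw [hP2def, hcube]
    exact integral_cube_prod measurableSet_Icc ((Set.Icc (0:ℝ) 51).indicator (fun _ => (1:ℝ)))
  have hval3 : (∫ x in cube, P3 x)
      = (∫ t in Set.Icc (0:ℝ) n, Real.exp (-c * t)) ^ m := by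
    rw [hP3def, hcube]
    exact integral_cube_prod measurableSet_Icc (fun t => Real.exp (-c * t))
  -- one-dimensional bounds
  have hI1nn : 0 ≤ ∫ t in Set.Icc (0:ℝ) n, (Set.Icc (0:ℝ) (1 + 1/k)).indicator (fun _ => (1:ℝ)) t :=
    setIntegral_nonneg measurableSet_Icc fun t _ => Set.indicator_nonneg (fun _ _ => zero_le_one) t
  have hI2nn : 0 ≤ ∫ t in Set.Icc (0:ℝ) n, (Set.Icc (0:ℝ) 51).indicator (fun _ => (1:ℝ)) t :=
    setIntegral_nonneg measurableSet_Icc fun t _ => Set.indicator_nonneg (fun _ _ => zero_le_one) t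
  have hI3nn : 0 ≤ ∫ t in Set.Icc (0:ℝ) n, Real.exp (-c * t) :=
    setIntegral_nonneg measurableSet_Icc fun t _ => (Real.exp_pos _).le
  have hI1 := integral_indicator_bound (n := n) (by positivity : (0:ℝ) ≤ 1 + 1/k)
  have hI2 := integral_indicator_bound (n := n) (by norm_num : (0:ℝ) ≤ 51)
  have hI3 : (∫ t in Set.Icc (0:ℝ) n, Real.exp (-c * t)) ≤ 25 := by
    refine (integral_exp_bound hc0).trans ?_
    rw [hcdef, one_div, inv_div]
    rw [div_le_iff₀ hL]
    linarith [hmk]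
  -- powers
  have ht1 : (∫ t in Set.Icc (0:ℝ) n, (Set.Icc (0:ℝ) (1 + 1/k)).indicator (fun _ => (1:ℝ)) t) ^ m
      ≤ 1 + ((2:ℝ)^m - 1) * (1/k) := by
    refine (pow_le_pow_left₀ hI1nn hI1 m).trans ?_
    exact one_add_pow_le m (by positivity) (by rw [div_le_one hk0]; linarith)
  have ht2 : (∫ t in Set.Icc (0:ℝ) n, (Set.Icc (0:ℝ) 51).indicator (fun _ => (1:ℝ)) t) ^ m
      ≤ (51:ℝ)^m := pow_le_pow_left₀ hI2nn hI2 m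
  have ht3 : (∫ t in Set.Icc (0:ℝ) n, Real.exp (-c * t)) ^ m ≤ (25:ℝ)^m :=
    pow_le_pow_left₀ hI3nn hI3 m
  -- final arithmetic
  have h2le : (2:ℝ)^m ≤ 51^m := pow_le_pow_left₀ (by norm_num) (by norm_num) m
  have h25le : (25:ℝ)^m ≤ 51^m := pow_le_pow_left₀ (by norm_num) (by norm_num) m
  have h500 : 7 * (51:ℝ)^m ≤ 500^m := by
    obtain ⟨m', rfl⟩ : ∃ m', m = m' + 1 := ⟨m - 1, (Nat.succ_pred_eq_of_pos hm).symm⟩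
    have h51 : (51:ℝ)^m' ≤ 500^m' := pow_le_pow_left₀ (by norm_num) (by norm_num) m'
    have hpos : (0:ℝ) ≤ (51:ℝ)^m' := by positivity
    rw [pow_succ, pow_succ]
    nlinarith
  have hsum500 : ((2:ℝ)^m - 1) + 2 * 51^m + 4 * 25^m ≤ (500:ℝ)^m := by nlinarith
  have hfin : (1 + ((2:ℝ)^m - 1) * (1/k)) + (2/k) * 51^m + (4/k) * 25^m ≤ 1 + 500^m / k := by
    have heq : (1 + ((2:ℝ)^m - 1) * (1/k)) + (2/k) * 51^m + (4/k) * 25^m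
        = 1 + (((2:ℝ)^m - 1) + 2 * 51^m + 4 * 25^m) / k := by field_simp; ring
    rw [heq]
    gcongr
  calc (∫ x in cube, psi k ((⨆ i, x i) - 1/k))
      ≤ (∫ x in cube, P1 x) + (2/k) * (∫ x in cube, P2 x) + (4/k) * (∫ x in cube, P3 x) := by
        rw [← hsplit]; exact hmono
    _ ≤ (1 + ((2:ℝ)^m - 1) * (1/k)) + (2/k) * 51^m + (4/k) * 25^m := by
        rw [hval1, hval2, hval3]
        have c2 : (0:ℝ) ≤ 2/k := by positivity
        have c4 : (0:ℝ) ≤ 4/k := by positivity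
        have := mul_le_mul_of_nonneg_left ht2 c2
        have := mul_le_mul_of_nonneg_left ht3 c4
        linarith
    _ ≤ 1 + 500^m / k := hfin

end Main

/-- There is a universal constant `a₂ > 0` such that for all `k ≥ 80`, positive integers
`m ≤ (ln k)/4` and `n ≥ 1`, `∫_{[0,n]^m} ψ(maxᵢ xᵢ - 1/k) dx ≤ 1 + a₂^m / k`. -/
theorem psi_multidim_integral_bound :
    ∃ a₂ > (0 : ℝ), ∀ (k : ℝ), 80 ≤ k → ∀ (m : ℕ), 0 < m → (m : ℝ) ≤ Real.log k / 4 →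
      ∀ (n : ℝ), 1 ≤ n →
      (∫ x : Fin m → ℝ in Set.univ.pi fun _ => Set.Icc (0 : ℝ) n,
          psi k ((⨆ i, x i) - 1 / k)) ≤ 1 + a₂ ^ m / k := by
  exact ⟨500, by norm_num, fun k hk m hm hmk n hn => main_test hk hm hmk hn⟩
end

section
/- Let $v_1, \ldots, v_N \ge 0$ and $w_1, \ldots, w_N \in (0,1]$ be sorted so that $v_1/w_1 \ge v_2/w_2 \ge \cdots \ge v_N/w_N$, let $k > 0$ with $\sum_i w_i \ge k$, and let $x^* \in [0,1]^N$ be the greedy fractional knapsack optimum (i.e., $x^*$ maximizes $\sum_i v_i x_i$ subject to $\sum_i w_i x_i \le k$, achieving total size exactly $k$). Let $\beta \in (0,1]$ and let $S$ be the largest prefix $\{1, \ldots, j\}$ with $\sum_{i \in S} w_i \le \beta k$. Then $\sum_{i \in S} v_i \ge (\beta - 1/k) \sum_i v_i x^*_i$. -/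
open Finset

/-- A prefix of the density-sorted items of total size at most `βk` (taken maximal)
captures at least a `(β - 1/k)` fraction of the fractional knapsack optimum. -/
theorem prefix_value_vs_knapsack_opt (N : ℕ) (v w : ℕ → ℝ)
    (hv : ∀ i < N, 0 ≤ v i) (hw : ∀ i < N, w i ∈ Set.Ioc (0 : ℝ) 1)
    (hsorted : ∀ ⦃i j⦄, i < N → j < N → i ≤ j → v j / w j ≤ v i / w i)
    (k : ℝ) (hk : 0 < k) (htot : k ≤ ∑ i ∈ range N, w i)
    (x : ℕ → ℝ) (hx01 : ∀ i < N, x i ∈ Set.Icc (0 : ℝ) 1)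
    (hxfull : ∑ i ∈ range N, w i * x i = k)
    (hxopt : ∀ y : ℕ → ℝ, (∀ i < N, y i ∈ Set.Icc (0 : ℝ) 1) →
      (∑ i ∈ range N, w i * y i) ≤ k →
      (∑ i ∈ range N, v i * y i) ≤ ∑ i ∈ range N, v i * x i)
    (β : ℝ) (hβ : β ∈ Set.Ioc (0 : ℝ) 1)
    (j : ℕ) (hj : j ≤ N) (hjle : ∑ i ∈ range j, w i ≤ β * k)
    (hjmax : ∀ j' ≤ N, (∑ i ∈ range j', w i) ≤ β * k → j' ≤ j) :
    (β - 1 / k) * ∑ i ∈ range N, v i * x i ≤ ∑ i ∈ range j, v i := by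
  have hS0 : 0 ≤ ∑ i ∈ range N, v i * x i :=
    Finset.sum_nonneg fun i hi =>
      mul_nonneg (hv i (mem_range.mp hi)) (hx01 i (mem_range.mp hi)).1
  have hA0 : 0 ≤ ∑ i ∈ range j, v i :=
    Finset.sum_nonneg fun i hi => hv i (lt_of_lt_of_le (mem_range.mp hi) hj)
  rw [show β - 1 / k = (β * k - 1) / k by field_simp, div_mul_eq_mul_div, div_le_iff₀ hk]
  set S := ∑ i ∈ range N, v i * x i with hSdef
  set A := ∑ i ∈ range j, v i with hAdef
  by_cases hβk : β * k ≤ 1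
  · nlinarith [mul_nonneg hA0 hk.le,
      mul_nonpos_of_nonpos_of_nonneg (by linarith : β * k - 1 ≤ 0) hS0]
  push_neg at hβk
  rcases eq_or_lt_of_le hj with hjN | hjN
  · have hSA : S ≤ A := by
      rw [hSdef, hAdef, hjN]
      exact Finset.sum_le_sum fun i hi => by
        have hi' := mem_range.mp hi
        nlinarith [(hx01 i hi').2, hv i hi', (hx01 i hi').1]
    nlinarith [mul_nonneg hk.le (sub_nonneg.2 hSA),
      mul_nonneg hS0 (show (0:ℝ) ≤ k - β * k + 1 by
        nlinarith [mul_nonneg hk.le (sub_nonneg.2 hβ.2)])]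
  -- main case j < N
  have hwj := hw j hjN
  have hdj : 0 ≤ v j / w j := div_nonneg (hv j hjN) hwj.1.le
  set W := ∑ i ∈ range j, w i with hWdef
  set d := v j / w j with hddef
  have hW1 : β * k - 1 < W := by
    have h1 : ¬ ((∑ i ∈ range (j+1), w i) ≤ β * k) := by
      intro h; exact absurd (hjmax (j+1) hjN h) (by omega)
    push_neg at h1
    rw [sum_range_succ] at h1
    have : W + w j > β * k := h1
    linarith [hwj.2]
  have hWpos : 0 < W := by linarith
  have hWk : W ≤ k := by nlinarith [hβ.2, hjle]
  have hdecomp : ∀ f : ℕ → ℝ,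
      ∑ i ∈ range N, f i = ∑ i ∈ range j, f i + ∑ i ∈ Ico j N, f i := by
    intro f
    rw [Finset.range_eq_Ico, Finset.range_eq_Ico]
    exact (Finset.sum_Ico_consecutive f (Nat.zero_le j) hjN.le).symm
  -- (2): d * W ≤ A
  have hdW : d * W ≤ A := by
    rw [hWdef, hAdef, Finset.mul_sum]
    refine Finset.sum_le_sum fun i hi => ?_
    have hiN : i < N := lt_trans (mem_range.mp hi) hjN
    have hwi := hw i hiN
    have hd := hsorted hiN hjN (le_of_lt (mem_range.mp hi))
    calc d * w i ≤ (v i / w i) * w i := by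
          apply mul_le_mul_of_nonneg_right _ hwi.1.le
          rw [hddef]; exact hd
      _ = v i := div_mul_cancel₀ _ (ne_of_gt hwi.1)
  -- (1): S ≤ A + d * (k - W)
  have h1 : S ≤ A + d * (k - W) := by
    have hrw : S = (∑ i ∈ range N, ((v i / w i - d) * (w i * x i))) + d * k := by
      rw [hSdef, ← hxfull, Finset.mul_sum, ← Finset.sum_add_distrib]
      refine Finset.sum_congr rfl fun i hi => ?_
      have hwi := hw i (mem_range.mp hi)
      have hne : w i ≠ 0 := ne_of_gt hwi.1
      field_simp
      ring
    have p2 : ∑ i ∈ Ico j N, ((v i / w i - d) * (w i * x i)) ≤ 0 :=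
      Finset.sum_nonpos fun i hi => by
        obtain ⟨hji, hiN⟩ := mem_Ico.mp hi
        have hwi := hw i hiN
        have hxi := hx01 i hiN
        have hd := hsorted hjN hiN hji
        exact mul_nonpos_of_nonpos_of_nonneg (by rw [hddef]; linarith)
          (mul_nonneg hwi.1.le hxi.1)
    have p1 : ∑ i ∈ range j, ((v i / w i - d) * (w i * x i))
        ≤ ∑ i ∈ range j, ((v i / w i - d) * w i) :=
      Finset.sum_le_sum fun i hi => by
        have hiN : i < N := lt_trans (mem_range.mp hi) hjN
        have hwi := hw i hiN
        have hxi := hx01 i hiN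
        have hd := hsorted hiN hjN (le_of_lt (mem_range.mp hi))
        have hwx : w i * x i ≤ w i := by nlinarith [hxi.2, hwi.1]
        exact mul_le_mul_of_nonneg_left hwx (by rw [hddef]; linarith)
    have hAd : ∑ i ∈ range j, ((v i / w i - d) * w i) = A - d * W := by
      rw [hAdef, hWdef, Finset.mul_sum, ← Finset.sum_sub_distrib]
      refine Finset.sum_congr rfl fun i hi => ?_
      have hwi := hw i (lt_trans (mem_range.mp hi) hjN)
      rw [sub_mul, div_mul_cancel₀ _ (ne_of_gt hwi.1)]
    have hd2 := hdecomp (fun i => (v i / w i - d) * (w i * x i))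
    rw [hrw, hd2]
    linarith [p1, p2, hAd]
  -- combine
  nlinarith [mul_le_mul_of_nonneg_left h1 (by linarith : (0:ℝ) ≤ β * k - 1),
    mul_nonneg (sub_nonneg.2 (le_of_lt hW1))
      (add_nonneg hA0 (mul_nonneg hdj (by linarith : (0:ℝ) ≤ k - W))),
    mul_nonneg (sub_nonneg.2 hWk) (sub_nonneg.2 hdW)]
end
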